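/- Let g ≥ 1 be an integer and let G be a graph with n ≥ 1 vertices such that every subgraph H of G satisfies |E(H)| ≤ 3(|V(H)| + g). Then the number of copies of K₄ in G is at most (283/24)·g² + 27·g^{3/2} + 108g·(ln n + 1) + 36n. -/

import Mathlib

open SimpleGraph Finset

section Aux

variable {V : Type*} [Fintype V] [DecidableEq V]

variable {V : Type*} [Fintype V] [DecidableEq V]

lemma edges_within (G : SimpleGraph V) [DecidableRel G.Adj] (g : ℕ)
    (hE : ∀ H : G.Subgraph, H.edgeSet.ncard ≤ 3 * (H.verts.ncard + g)) (s : Finset V) :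
    ∑ u ∈ s, (s.filter (G.Adj u)).card ≤ 6 * (s.card + g) := by
  classical
  set G' : SimpleGraph (↑s : Set V) := G.induce (↑s : Set V) with hG'
  letI hdec : DecidableRel G'.Adj := Classical.decRel _
  -- the subgraph of G induced on s
  set H : G.Subgraph :=
    { verts := (↑s : Set V)
      Adj := fun a b => G.Adj a b ∧ a ∈ s ∧ b ∈ s
      adj_sub := fun h => h.1
      edge_vert := fun h => h.2.1
      symm := ⟨fun a b h => ⟨h.1.symm, h.2.2, h.2.1⟩⟩ } with hH
  set Es : Finset (Sym2 V) := G.edgeFinset.filter (fun e => ∀ x ∈ e, x ∈ s) with hEs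
  have hedge : H.edgeSet = ↑Es := by
    ext e
    induction e with
    | _ a b =>
      simp only [Subgraph.mem_edgeSet, hH, hEs, coe_filter, Set.mem_setOf_eq,
        mem_coe, mem_edgeFinset, mem_edgeSet, Sym2.mem_iff]
      constructor
      · rintro ⟨h, ha, hb⟩
        exact ⟨h, by rintro x (rfl | rfl) <;> assumption⟩
      · rintro ⟨h, hx⟩
        exact ⟨h, hx a (Or.inl rfl), hx b (Or.inr rfl)⟩
  have hcard : Es.card ≤ 3 * (s.card + g) := by
    have := hE H
    rwa [hedge, Set.ncard_coe_finset, show H.verts = (↑s : Set V) from rfl,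
      Set.ncard_coe_finset] at this
  -- degrees of induced graph
  have hdeg : ∀ x : (↑s : Set V), G'.degree x = (s.filter (G.Adj ↑x)).card := by
    intro x
    rw [SimpleGraph.degree]
    apply Finset.card_bij (fun (u : (↑s : Set V)) _ => (u : V))
    · intro u hu
      rw [SimpleGraph.mem_neighborFinset] at hu
      exact mem_filter.2 ⟨u.2, hu⟩
    · intro a ha b hb hab
      exact Subtype.ext hab
    · intro w hw
      rw [mem_filter] at hw
      exact ⟨⟨w, hw.1⟩, by rw [SimpleGraph.mem_neighborFinset]; exact hw.2, rfl⟩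
  have hsum : ∑ u ∈ s, (s.filter (G.Adj u)).card = ∑ x : (↑s : Set V), G'.degree x := by
    rw [← Finset.sum_coe_sort s (fun u => (s.filter (G.Adj u)).card)]
    exact Finset.sum_congr rfl fun x _ => (hdeg x).symm
  have hhand : ∑ x : (↑s : Set V), G'.degree x = 2 * G'.edgeFinset.card :=
    G'.sum_degrees_eq_twice_card_edges
  have hinj : G'.edgeFinset.card ≤ Es.card := by
    apply Finset.card_le_card_of_injOn (Sym2.map (Subtype.val : (↑s : Set V) → V))
    · intro e he
      rw [Finset.mem_coe, mem_edgeFinset] at he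
      induction e with
      | _ a b =>
        have hadj : G.Adj ↑a ↑b := he
        simp only [Finset.mem_coe, hEs, Sym2.map_pair_eq, mem_filter, mem_edgeFinset, mem_edgeSet, Sym2.mem_iff]
        exact ⟨hadj, by rintro x (rfl | rfl) <;> [exact a.2; exact b.2]⟩
    · intro a _ b _ hab
      exact Sym2.map.injective Subtype.val_injective hab
  omega


variable {V : Type*} [Fintype V] [DecidableEq V]

lemma count_le (G : SimpleGraph V) [DecidableRel G.Adj] (g : ℕ)
    (hEW : ∀ s : Finset V, ∑ u ∈ s, (s.filter (G.Adj u)).card ≤ 6 * (s.card + g)) :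
    ∀ (m : ℕ) (s : Finset V), s.card = m →
      ((G.cliqueFinset 4).filter (· ⊆ s)).card ≤
        ∑ k ∈ Icc 1 m, (min (k - 1) ((6 * k + 6 * g) / k)).choose 3 := by
  intro m
  induction m with
  | zero =>
    intro s hs
    rw [Finset.card_eq_zero] at hs
    subst hs
    have hempty : (G.cliqueFinset 4).filter (· ⊆ (∅ : Finset V)) = ∅ := by
      ext T
      simp only [mem_filter, Finset.subset_empty, Finset.notMem_empty, iff_false, not_and,
        mem_cliqueFinset_iff]
      rintro h1 rfl
      simpa using h1.card_eq
    rw [hempty]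
    simp
  | succ m ih =>
    intro s hs
    have hne : s.Nonempty := by rw [← Finset.card_pos, hs]; omega
    obtain ⟨v, hv, hmin⟩ := s.exists_min_image (fun u => (s.filter (G.Adj u)).card) hne
    set d := (s.filter (G.Adj v)).card with hd
    have hd1 : d ≤ m := by
      have : s.filter (G.Adj v) ⊆ s.erase v := by
        intro u hu
        rw [mem_filter] at hu
        exact Finset.mem_erase.2 ⟨fun h => G.irrefl (h ▸ hu.2), hu.1⟩
      have := Finset.card_le_card this
      rwa [Finset.card_erase_of_mem hv, hs] at this
    have hd2 : d ≤ (6 * (m + 1) + 6 * g) / (m + 1) := by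
      rw [Nat.le_div_iff_mul_le (by omega)]
      calc d * (m + 1) = ∑ _u ∈ s, d := by rw [Finset.sum_const, hs]; ring
        _ ≤ ∑ u ∈ s, (s.filter (G.Adj u)).card := Finset.sum_le_sum fun u hu => hmin u hu
        _ ≤ 6 * (s.card + g) := hEW s
        _ = 6 * (m + 1) + 6 * g := by rw [hs]; ring
    -- split the cliques
    have hsplit : ((G.cliqueFinset 4).filter (· ⊆ s)).card ≤
        ((G.cliqueFinset 4).filter (· ⊆ s.erase v)).card + d.choose 3 := by
      have hsub : (G.cliqueFinset 4).filter (· ⊆ s) ⊆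
          (G.cliqueFinset 4).filter (· ⊆ s.erase v) ∪
            (G.cliqueFinset 4).filter (fun T => T ⊆ s ∧ v ∈ T) := by
        intro T hT
        rw [mem_filter] at hT
        by_cases hvT : v ∈ T
        · exact Finset.mem_union_right _ (mem_filter.2 ⟨hT.1, hT.2, hvT⟩)
        · exact Finset.mem_union_left _ (mem_filter.2 ⟨hT.1, (Finset.subset_erase).2 ⟨hT.2, hvT⟩⟩)
      have h2 : ((G.cliqueFinset 4).filter (fun T => T ⊆ s ∧ v ∈ T)).card ≤ d.choose 3 := by
        rw [hd, ← Finset.card_powersetCard]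
        apply Finset.card_le_card_of_injOn (fun T => T.erase v)
        · intro T hT
          rw [Finset.mem_coe, mem_filter, mem_cliqueFinset_iff] at hT
          obtain ⟨hclq, hTs, hvT⟩ := hT
          rw [Finset.mem_coe, Finset.mem_powersetCard]
          refine ⟨?_, by rw [Finset.card_erase_of_mem hvT, hclq.card_eq]⟩
          intro u hu
          rw [Finset.mem_erase] at hu
          exact mem_filter.2 ⟨hTs hu.2, hclq.1 hvT hu.2 (Ne.symm hu.1)⟩
        · intro T hT T' hT' h
          replace h : T.erase v = T'.erase v := h
          rw [Finset.coe_filter, Set.mem_setOf_eq] at hT hT'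
          rw [← Finset.insert_erase hT.2.2, h, Finset.insert_erase hT'.2.2]
      calc ((G.cliqueFinset 4).filter (· ⊆ s)).card ≤ _ := Finset.card_le_card hsub
        _ ≤ _ + _ := Finset.card_union_le _ _
        _ ≤ _ + d.choose 3 := Nat.add_le_add_left h2 _
    have hrec := ih (s.erase v) (by rw [Finset.card_erase_of_mem hv, hs]; omega)
    have hsum : ∑ k ∈ Icc 1 (m + 1), (min (k - 1) ((6 * k + 6 * g) / k)).choose 3
        = (∑ k ∈ Icc 1 m, (min (k - 1) ((6 * k + 6 * g) / k)).choose 3)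
          + (min m ((6 * (m + 1) + 6 * g) / (m + 1))).choose 3 := by
      rw [← Finset.Ico_add_one_right_eq_Icc, Finset.sum_Ico_succ_top (by omega), Finset.Ico_add_one_right_eq_Icc]
      norm_num
    have hmono : d.choose 3 ≤ (min m ((6 * (m + 1) + 6 * g) / (m + 1))).choose 3 :=
      Nat.choose_le_choose 3 (le_min hd1 hd2)
    omega

end Aux

section Analytic

lemma head_eq (B : ℕ) : ∑ k ∈ Icc 1 B, (k - 1).choose 3 = B.choose 4 := by
  induction B with
  | zero => simp
  | succ B ih =>
    rw [← Finset.Ico_add_one_right_eq_Icc, Finset.sum_Ico_succ_top (by omega), Finset.Ico_add_one_right_eq_Icc, ih,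
      Nat.choose_succ_succ' B 3]
    simp [Nat.add_sub_cancel]
    omega

lemma cast_choose4 (A : ℕ) (h : 4 ≤ A) :
    24 * ((A.choose 4 : ℕ) : ℝ) = (A:ℝ) * ((A:ℝ) - 1) * ((A:ℝ) - 2) * ((A:ℝ) - 3) := by
  have hd : A.descFactorial 4 = 24 * A.choose 4 := by
    rw [Nat.descFactorial_eq_factorial_mul_choose]; norm_num [Nat.factorial]
  have hd2 : A.descFactorial 4 = (A - 3) * ((A - 2) * ((A - 1) * A)) := by
    simp [Nat.descFactorial_succ, Nat.descFactorial_zero]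
  have heq : 24 * A.choose 4 = (A - 3) * ((A - 2) * ((A - 1) * A)) := by rw [← hd, hd2]
  have := congrArg (Nat.cast : ℕ → ℝ) heq
  push_cast [Nat.cast_sub (show 3 ≤ A by omega), Nat.cast_sub (show 2 ≤ A by omega),
    Nat.cast_sub (show 1 ≤ A by omega)] at this
  linarith


lemma sum_Ioc_inv_cube_le {k n : ℕ} (hk : k ≠ 0) (h : k ≤ n) :
    (∑ i ∈ Ioc k n, ((i : ℝ) ^ 3)⁻¹) ≤ (2 * (k : ℝ) ^ 2)⁻¹ - (2 * (n : ℝ) ^ 2)⁻¹ := by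
  refine Nat.le_induction ?_ ?_ n h
  · simp
  intro n hn IH
  rw [sum_Ioc_succ_top hn]
  have A : 0 < (n : ℝ) := by
    have : 0 < n := lt_of_lt_of_le (Nat.pos_of_ne_zero hk) hn
    exact_mod_cast this
  have step : (((n : ℝ) + 1) ^ 3)⁻¹ ≤ (2 * (n : ℝ) ^ 2)⁻¹ - (2 * ((n : ℝ) + 1) ^ 2)⁻¹ := by
    rw [inv_eq_one_div, inv_eq_one_div, inv_eq_one_div, div_sub_div _ _ (by positivity) (by positivity),
      div_le_div_iff₀ (by positivity) (by positivity)]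
    nlinarith [A, sq_nonneg ((n:ℝ))]
  push_cast
  linarith

set_option maxHeartbeats 1000000 in
lemma analytic (g n : ℕ) (hg : 1 ≤ g) (hn : 1 ≤ n) :
    ((∑ k ∈ Icc 1 n, (min (k - 1) ((6 * k + 6 * g) / k)).choose 3 : ℕ) : ℝ) ≤
      (283 / 24) * (g : ℝ) ^ 2 + 27 * (g : ℝ) ^ ((3 : ℝ) / 2) +
        108 * (g : ℝ) * (Real.log n + 1) + 36 * (n : ℝ) := by
  have hg0 : (0:ℝ) ≤ g := by positivity
  set u : ℝ := Real.sqrt g with hu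
  have hu2 : u ^ 2 = (g : ℝ) := Real.sq_sqrt hg0
  have hu1 : 1 ≤ u := by
    rw [hu, show (1:ℝ) = Real.sqrt 1 by simp]
    exact Real.sqrt_le_sqrt (by exact_mod_cast hg)
  have hu0 : 0 < u := lt_of_lt_of_le one_pos hu1
  have hrpow : (g : ℝ) ^ ((3:ℝ)/2) = u ^ 3 := by
    rw [hu, Real.sqrt_eq_rpow, ← Real.rpow_natCast ((g:ℝ) ^ ((1:ℝ)/2)) 3, ← Real.rpow_mul hg0]
    norm_num
  set A : ℕ := Nat.sqrt (16 * g) + 1 with hA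
  have hA5 : 5 ≤ A := by
    have h16 : (16 : ℕ) ≤ 16 * g := by omega
    have := Nat.sqrt_le_sqrt h16
    rw [show Nat.sqrt 16 = 4 by rw [show (16:ℕ) = 4 * 4 by norm_num, Nat.sqrt_eq]] at this
    omega
  have hAu : 4 * u ≤ (A : ℝ) := by
    have h1 : 16 * g < A * A := Nat.lt_succ_sqrt (16 * g)
    have h2 : (16 * (g:ℝ)) ≤ (A:ℝ) * (A:ℝ) := by exact_mod_cast h1.le
    have h3 : 4 * u = Real.sqrt (16 * g) := by
      rw [hu, show (16:ℝ) * g = 4^2 * g by ring, Real.sqrt_mul (by positivity),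
        Real.sqrt_sq (by norm_num)]
    rw [h3]
    calc Real.sqrt (16 * (g:ℝ)) ≤ Real.sqrt ((A:ℝ) * A) := Real.sqrt_le_sqrt h2
      _ = A := Real.sqrt_mul_self (by positivity)
  have hApos : (0:ℝ) < A := by nlinarith
  have hAle : (A:ℝ) ≤ 4 * u + 1 := by
    have h3 : ((Nat.sqrt (16*g) : ℝ))^2 ≤ 16 * g := by
      exact_mod_cast Nat.sqrt_le' (16*g)
    have h4 : (0:ℝ) ≤ (Nat.sqrt (16*g) : ℝ) := Nat.cast_nonneg _
    have h5 : (Nat.sqrt (16*g) : ℝ) ≤ 4 * u := by nlinarith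
    have : (A:ℝ) = (Nat.sqrt (16*g) : ℝ) + 1 := by rw [hA]; push_cast; ring
    linarith
  -- head bound
  have hhead : ((A.choose 4 : ℕ) : ℝ) ≤ (256 * u^4 - 128 * u^3 + 16 * u^2) / 24 := by
    have hcast := cast_choose4 A (by omega)
    have ha5 : (5:ℝ) ≤ A := by exact_mod_cast hA5
    have m1 : (A:ℝ) * ((A:ℝ) - 3) ≤ (4*u+1) * (4*u - 2) := by nlinarith
    have m2 : ((A:ℝ) - 1) * ((A:ℝ) - 2) ≤ (4*u) * (4*u - 1) := by nlinarith
    have p1 : (0:ℝ) ≤ (A:ℝ) * ((A:ℝ) - 3) := by nlinarith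
    have p2 : (0:ℝ) ≤ ((A:ℝ) - 1) * ((A:ℝ) - 2) := by nlinarith
    have q1 : (0:ℝ) ≤ (4*u) * (4*u-1) := by nlinarith
    have prod : ((A:ℝ) * ((A:ℝ) - 3)) * (((A:ℝ) - 1) * ((A:ℝ) - 2)) ≤
        ((4*u+1) * (4*u - 2)) * ((4*u) * (4*u - 1)) := by
      apply mul_le_mul m1 m2 p2 (by nlinarith)
    nlinarith [prod]
  -- pointwise tail bound
  have hterm : ∀ k : ℕ, 1 ≤ k →
      (((min (k - 1) ((6 * k + 6 * g) / k)).choose 3 : ℕ) : ℝ) ≤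
        36 + 108 * (g:ℝ) * (k:ℝ)⁻¹ + 108 * (g:ℝ)^2 * ((k:ℝ)^2)⁻¹ + 36 * (g:ℝ)^3 * ((k:ℝ)^3)⁻¹ := by
    intro k hk
    have hk0 : (0:ℝ) < k := by exact_mod_cast hk
    set q : ℕ := (6 * k + 6 * g) / k with hq
    have h1 : (min (k - 1) q).choose 3 ≤ q.choose 3 :=
      Nat.choose_le_choose 3 (min_le_right _ _)
    have h2 : ((q.choose 3 : ℕ) : ℝ) ≤ (q:ℝ)^3 / 6 := by
      have ha : q.descFactorial 3 = 6 * q.choose 3 := by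
        rw [Nat.descFactorial_eq_factorial_mul_choose]; norm_num [Nat.factorial]
      have hb : q.descFactorial 3 ≤ q ^ 3 := Nat.descFactorial_le_pow q 3
      have hc : (6:ℕ) * q.choose 3 ≤ q ^ 3 := ha ▸ hb
      have := (Nat.cast_le (α := ℝ)).2 hc
      push_cast at this
      linarith
    have h3 : (q:ℝ) ≤ 6 + 6 * (g:ℝ) * (k:ℝ)⁻¹ := by
      calc (q:ℝ) ≤ ((6 * k + 6 * g : ℕ) : ℝ) / ((k : ℕ) : ℝ) := Nat.cast_div_le
        _ = 6 + 6 * (g:ℝ) * (k:ℝ)⁻¹ := by push_cast; field_simp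
    have hq0 : (0:ℝ) ≤ (q:ℝ) := Nat.cast_nonneg _
    have h4 : (q:ℝ)^3/6 ≤ (6 + 6 * (g:ℝ) * (k:ℝ)⁻¹)^3/6 := by
      have : (q:ℝ)^3 ≤ (6 + 6 * (g:ℝ) * (k:ℝ)⁻¹)^3 := by
        apply pow_le_pow_left₀ hq0 h3
      linarith
    have h5 : (6 + 6 * (g:ℝ) * (k:ℝ)⁻¹)^3/6 =
        36 + 108 * (g:ℝ) * (k:ℝ)⁻¹ + 108 * (g:ℝ)^2 * ((k:ℝ)^2)⁻¹ + 36 * (g:ℝ)^3 * ((k:ℝ)^3)⁻¹ := by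
      ring
    calc (((min (k - 1) q).choose 3 : ℕ) : ℝ) ≤ ((q.choose 3 : ℕ) : ℝ) := by exact_mod_cast h1
      _ ≤ (q:ℝ)^3/6 := h2
      _ ≤ _ := h4
      _ = _ := h5
  have hn0 : (1:ℝ) ≤ (n:ℝ) := Nat.one_le_cast.mpr hn
  have hlog : (0:ℝ) ≤ Real.log n := Real.log_nonneg hn0
  have hgu : (g:ℝ) = u ^ 2 := hu2.symm
  rw [hrpow]
  rcases le_or_gt n A with hcase | hcase
  · -- n ≤ A : the whole sum is bounded by the head
    have hsum : (∑ k ∈ Icc 1 n, (min (k - 1) ((6 * k + 6 * g) / k)).choose 3) ≤ A.choose 4 := by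
      calc ∑ k ∈ Icc 1 n, (min (k - 1) ((6 * k + 6 * g) / k)).choose 3
          ≤ ∑ k ∈ Icc 1 n, (k - 1).choose 3 :=
            Finset.sum_le_sum fun k _ => Nat.choose_le_choose 3 (min_le_left _ _)
        _ ≤ ∑ k ∈ Icc 1 A, (k - 1).choose 3 :=
            Finset.sum_le_sum_of_subset (Finset.Icc_subset_Icc_right hcase)
        _ = A.choose 4 := head_eq A
    have h1 : ((∑ k ∈ Icc 1 n, (min (k - 1) ((6 * k + 6 * g) / k)).choose 3 : ℕ) : ℝ)
        ≤ ((A.choose 4 : ℕ) : ℝ) := Nat.cast_le.2 hsum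
    nlinarith [h1, hhead, hu1, hu0, hlog, hn0, mul_nonneg (mul_nonneg (by norm_num : (0:ℝ) ≤ 108) hg0) hlog]
  · -- A < n : split into head and tail
    have hsplit : Icc 1 n = Icc 1 A ∪ Ioc A n := by
      rw [show (1:ℕ) = 0 + 1 by rfl, Finset.Icc_add_one_left_eq_Ioc, Finset.Icc_add_one_left_eq_Ioc,
        Finset.Ioc_union_Ioc_eq_Ioc (Nat.zero_le A) hcase.le]
    have hdisj : Disjoint (Icc 1 A) (Ioc A n) := by
      rw [Finset.disjoint_left]
      intro a ha hb
      rw [Finset.mem_Icc] at ha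
      rw [Finset.mem_Ioc] at hb
      omega
    rw [hsplit, Finset.sum_union hdisj]
    push_cast [Nat.cast_sum]
    have hheadsum : ((∑ k ∈ Icc 1 A, (min (k - 1) ((6 * k + 6 * g) / k)).choose 3 : ℕ) : ℝ)
        ≤ ((A.choose 4 : ℕ) : ℝ) := by
      refine Nat.cast_le.2 ?_
      calc ∑ k ∈ Icc 1 A, (min (k - 1) ((6 * k + 6 * g) / k)).choose 3
          ≤ ∑ k ∈ Icc 1 A, (k - 1).choose 3 :=
            Finset.sum_le_sum fun k _ => Nat.choose_le_choose 3 (min_le_left _ _)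
        _ = A.choose 4 := head_eq A
    have htail : (∑ k ∈ Ioc A n, (((min (k - 1) ((6 * k + 6 * g) / k)).choose 3 : ℕ) : ℝ))
        ≤ 36 * (n:ℝ) + 108 * (g:ℝ) * (Real.log n + 1)
          + 108 * (g:ℝ)^2 * ((A:ℝ))⁻¹ + 36 * (g:ℝ)^3 * (2 * (A:ℝ)^2)⁻¹ := by
      have step1 : (∑ k ∈ Ioc A n, (((min (k - 1) ((6 * k + 6 * g) / k)).choose 3 : ℕ) : ℝ))
          ≤ ∑ k ∈ Ioc A n, (36 + 108 * (g:ℝ) * (k:ℝ)⁻¹ + 108 * (g:ℝ)^2 * ((k:ℝ)^2)⁻¹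
              + 36 * (g:ℝ)^3 * ((k:ℝ)^3)⁻¹) := by
        refine Finset.sum_le_sum fun k hk => ?_
        rw [Finset.mem_Ioc] at hk
        exact hterm k (by omega)
      refine step1.trans ?_
      rw [Finset.sum_add_distrib, Finset.sum_add_distrib, Finset.sum_add_distrib]
      have e1 : (∑ _k ∈ Ioc A n, (36:ℝ)) ≤ 36 * (n:ℝ) := by
        rw [Finset.sum_const, Nat.card_Ioc]
        have : ((n - A : ℕ) : ℝ) ≤ (n : ℝ) := by
          have : (n - A : ℕ) ≤ n := Nat.sub_le n A
          exact_mod_cast this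
        rw [nsmul_eq_mul]
        nlinarith
      have e2 : (∑ k ∈ Ioc A n, 108 * (g:ℝ) * (k:ℝ)⁻¹) ≤ 108 * (g:ℝ) * (Real.log n + 1) := by
        rw [← Finset.mul_sum]
        have h21 : (∑ k ∈ Ioc A n, ((k:ℝ))⁻¹) ≤ ∑ k ∈ Icc 1 n, ((k:ℝ))⁻¹ := by
          refine Finset.sum_le_sum_of_subset_of_nonneg ?_ (fun i _ _ => by positivity)
          intro a ha
          rw [Finset.mem_Ioc] at ha
          rw [Finset.mem_Icc]
          omega
        have h22 : (∑ k ∈ Icc 1 n, ((k:ℝ))⁻¹) = ((harmonic n : ℚ) : ℝ) := by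
          rw [harmonic_eq_sum_Icc]
          push_cast
          rfl
        have h23 : ((harmonic n : ℚ) : ℝ) ≤ 1 + Real.log n := harmonic_le_one_add_log n
        have : (∑ k ∈ Ioc A n, ((k:ℝ))⁻¹) ≤ Real.log n + 1 := by
          rw [h22] at h21
          linarith
        have hc : (0:ℝ) ≤ 108 * (g:ℝ) := by positivity
        nlinarith
      have e3 : (∑ k ∈ Ioc A n, 108 * (g:ℝ)^2 * ((k:ℝ)^2)⁻¹) ≤ 108 * (g:ℝ)^2 * ((A:ℝ))⁻¹ := by
        rw [← Finset.mul_sum]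
        have h31 : (∑ k ∈ Ioc A n, ((k:ℝ)^2)⁻¹) ≤ (A:ℝ)⁻¹ - (n:ℝ)⁻¹ :=
          sum_Ioc_inv_sq_le_sub (by omega) hcase.le
        have h32 : (0:ℝ) ≤ (n:ℝ)⁻¹ := by positivity
        have hc : (0:ℝ) ≤ 108 * (g:ℝ)^2 := by positivity
        nlinarith
      have e4 : (∑ k ∈ Ioc A n, 36 * (g:ℝ)^3 * ((k:ℝ)^3)⁻¹) ≤ 36 * (g:ℝ)^3 * (2 * (A:ℝ)^2)⁻¹ := by
        rw [← Finset.mul_sum]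
        have h41 : (∑ k ∈ Ioc A n, ((k:ℝ)^3)⁻¹) ≤ (2 * (A:ℝ)^2)⁻¹ - (2 * (n:ℝ)^2)⁻¹ :=
          sum_Ioc_inv_cube_le (by omega) hcase.le
        have h42 : (0:ℝ) ≤ (2 * (n:ℝ)^2)⁻¹ := by positivity
        have hc : (0:ℝ) ≤ 36 * (g:ℝ)^3 := by positivity
        nlinarith
      linarith
    -- combine
    have t2 : 108 * (g:ℝ)^2 * ((A:ℝ))⁻¹ ≤ 27 * u^3 := by
      have hi : (A:ℝ)⁻¹ ≤ (4*u)⁻¹ := by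
        apply inv_anti₀ (by positivity) hAu
      have : 108 * (g:ℝ)^2 * ((A:ℝ))⁻¹ ≤ 108 * (g:ℝ)^2 * (4*u)⁻¹ := by
        apply mul_le_mul_of_nonneg_left hi (by positivity)
      have heq : 108 * (g:ℝ)^2 * (4*u)⁻¹ = 27 * u^3 := by
        rw [hgu]
        field_simp
        ring
      linarith
    have t3 : 36 * (g:ℝ)^3 * (2 * (A:ℝ)^2)⁻¹ ≤ (9/8) * u^4 := by
      have hi : (2 * (A:ℝ)^2)⁻¹ ≤ (2 * (16 * u^2))⁻¹ := by
        apply inv_anti₀ (by positivity) (by nlinarith)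
      have : 36 * (g:ℝ)^3 * (2 * (A:ℝ)^2)⁻¹ ≤ 36 * (g:ℝ)^3 * (2 * (16 * u^2))⁻¹ := by
        apply mul_le_mul_of_nonneg_left hi (by positivity)
      have heq : 36 * (g:ℝ)^3 * (2 * (16 * u^2))⁻¹ = (9/8) * u^4 := by
        rw [hgu]
        field_simp
        ring
      linarith
    have hfin : ((A.choose 4 : ℕ) : ℝ) + (36 * (n:ℝ) + 108 * (g:ℝ) * (Real.log n + 1)
          + 27 * u^3 + (9/8) * u^4)
        ≤ 283 / 24 * (g:ℝ)^2 + 27 * u^3 + 108 * (g:ℝ) * (Real.log n + 1) + 36 * (n:ℝ) := by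
      rw [hgu]
      nlinarith [hhead, hu1, hu0]
    push_cast at hheadsum
    linarith [hheadsum, htail]

end Analytic

/-- If `g ≥ 1` and every subgraph `H` of an `n`-vertex graph `G` (with `n ≥ 1`) satisfies
`|E(H)| ≤ 3(|V(H)| + g)`, then the number of copies of `K₄` in `G` is at most
`(283/24)·g² + 27·g^{3/2} + 108g(ln n + 1) + 36n`. -/
theorem stmt7 {V : Type*} [Fintype V] [DecidableEq V]
    (G : SimpleGraph V) [DecidableRel G.Adj]
    (g : ℕ) (hg : 1 ≤ g) (hn : 1 ≤ Fintype.card V)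
    (hE : ∀ H : G.Subgraph, H.edgeSet.ncard ≤ 3 * (H.verts.ncard + g)) :
    ((G.cliqueFinset 4).card : ℝ) ≤
      (283 / 24) * (g : ℝ) ^ 2 + 27 * (g : ℝ) ^ ((3 : ℝ) / 2) +
        108 * (g : ℝ) * (Real.log (Fintype.card V) + 1) + 36 * (Fintype.card V : ℝ) := by
  classical
  have hcount := count_le G g (fun s => edges_within G g hE s) (Fintype.card V)
    (Finset.univ : Finset V) (Finset.card_univ)
  rw [Finset.filter_true_of_mem (fun T _ => Finset.subset_univ T)] at hcount
  have hcast : ((G.cliqueFinset 4).card : ℝ) ≤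
      ((∑ k ∈ Finset.Icc 1 (Fintype.card V),
        (min (k - 1) ((6 * k + 6 * g) / k)).choose 3 : ℕ) : ℝ) := Nat.cast_le.2 hcount
  exact hcast.trans (analytic g (Fintype.card V) hg hn)
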